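/- Let λ be the product measure (uniform on S²) × (Lebesgue on ℝ₊) × (uniform on S²) on 𝔻 = S² × ℝ₊ × S², and fix a unit vector e ∈ S². Then the λ-measure of the set Â' := {(u,h,v) ∈ 𝔻 : ∠(−e, u) ≤ 2/h} is finite, and likewise the λ-measure of Ã' := {(u,h,v) ∈ 𝔻 : ∠(−u, v) ≤ 2/h} is finite. -/

import Mathlib

open MeasureTheory ProbabilityTheory InnerProductGeometry Real Set
open scoped ENNReal NNReal

noncomputable section

abbrev E3 : Type := EuclideanSpace ℝ (Fin 3)
abbrev S2 : Type := Metric.sphere (0 : E3) 1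

/-- Uniform (normalized) probability measure on the unit sphere `S²`. -/
noncomputable def uniformS2 : Measure S2 :=
  ((volume : Measure E3).toSphere Set.univ)⁻¹ • (volume : Measure E3).toSphere

/-- Uniform measure on `S²`, viewed as a measure on `ℝ³` (supported on the sphere). -/
noncomputable def uniformS2amb : Measure E3 := uniformS2.map Subtype.val

/-- Cross product on `ℝ³`. -/
noncomputable def cross3 (u v : E3) : E3 :=
  (WithLp.equiv 2 (Fin 3 → ℝ)).symm
    (crossProduct ((WithLp.equiv 2 (Fin 3 → ℝ)) u) ((WithLp.equiv 2 (Fin 3 → ℝ)) v))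

/-- The flat measure `λ = (uniform on S²) × (Lebesgue on ℝ₊) × (uniform on S²)` on
`𝔻 = S² × ℝ₊ × S²`. -/
noncomputable def lamD : Measure (S2 × ℝ × S2) :=
  uniformS2.prod ((volume.restrict (Set.Ioi (0:ℝ))).prod uniformS2)

/-! ### Auxiliary lemmas -/

open scoped Pointwise

lemma measurable_angle2 {α : Type*} [MeasurableSpace α] {f g : α → E3}
    (hf : Measurable f) (hg : Measurable g) :
    Measurable fun a => angle (f a) (g a) := by
  have h : ∀ a, angle (f a) (g a)
      = Real.arccos ((inner ℝ (f a) (g a) : ℝ) / (‖f a‖ * ‖g a‖)) := fun a => rfl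
  simp only [h]
  exact Real.continuous_arccos.measurable.comp
    ((hf.inner hg).div (hf.norm.mul hg.norm))

lemma toSphere_univ_ne_zero : (volume : Measure E3).toSphere Set.univ ≠ 0 := by
  rw [Measure.toSphere_apply_univ]
  exact mul_ne_zero (by simp [finrank_euclideanSpace_fin]) (Metric.measure_ball_pos _ _ one_pos).ne'

lemma toSphere_univ_ne_top : (volume : Measure E3).toSphere Set.univ ≠ ⊤ :=
  measure_ne_top _ _

instance : IsProbabilityMeasure uniformS2 := by
  constructor
  rw [uniformS2, Measure.smul_apply, smul_eq_mul,
    ENNReal.inv_mul_cancel toSphere_univ_ne_zero toSphere_univ_ne_top]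

/-- The constant in the spherical cap bound. -/
def spK : ℝ≥0∞ := ((volume : Measure E3).toSphere Set.univ)⁻¹ * 24

lemma spK_ne_top : spK ≠ ⊤ := by
  refine ENNReal.mul_ne_top ?_ (by norm_num)
  exact ENNReal.inv_ne_top.2 toSphere_univ_ne_zero

/-- The "slab" containing the cone over a spherical cap has small volume. -/
lemma volT_le (d : E3) (hd : ‖d‖ = 1) (t : ℝ) (ht : 0 ≤ t) :
    volume {x : E3 | |(inner ℝ d x : ℝ)| ≤ 1 ∧ ‖x - (inner ℝ d x : ℝ) • d‖ ≤ t}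
      ≤ ENNReal.ofReal (8 * t ^ 2) := by
  -- orthonormal basis with `b 0 = d`
  have hcard : Module.finrank ℝ E3 = Fintype.card (Fin 3) := by
    simp [finrank_euclideanSpace_fin]
  have hone : Orthonormal ℝ (({0} : Set (Fin 3)).restrict fun _ : Fin 3 => d) := by
    constructor
    · intro i; exact hd
    · intro i j hij
      exfalso
      apply hij
      have hi := i.2; have hj := j.2
      simp only [Set.mem_singleton_iff] at hi hj
      exact Subtype.ext (hi.trans hj.symm)
  obtain ⟨b, hb⟩ := hone.exists_orthonormalBasis_extension_of_card_eq hcard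
  have hb0 : b 0 = d := hb 0 rfl
  set B : Set (Fin 3 → ℝ) :=
    Set.univ.pi fun i => Icc (-(if i = 0 then 1 else t)) (if i = 0 then 1 else t) with hB
  have hBm : MeasurableSet B := MeasurableSet.univ_pi fun i => measurableSet_Icc
  have hsub : {x : E3 | |(inner ℝ d x : ℝ)| ≤ 1 ∧ ‖x - (inner ℝ d x : ℝ) • d‖ ≤ t}
      ⊆ b.repr ⁻¹' ((MeasurableEquiv.toLp 2 (Fin 3 → ℝ)).symm ⁻¹' B) := by
    intro x hx
    obtain ⟨hx1, hx2⟩ := hx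
    intro i _
    have hrepr : (MeasurableEquiv.toLp 2 (Fin 3 → ℝ)).symm (b.repr x) i
        = (inner ℝ (b i) x : ℝ) := by
      rw [← OrthonormalBasis.repr_apply_apply]
      rfl
    rw [hrepr]
    by_cases hi : i = 0
    · subst hi
      rw [hb0]
      simpa [Set.mem_Icc, if_pos] using abs_le.1 hx1
    · simp only [if_neg hi, Set.mem_Icc]
      have horth : (inner ℝ (b i) ((inner ℝ d x : ℝ) • d) : ℝ) = 0 := by
        rw [real_inner_smul_right, ← hb0]
        rw [b.orthonormal.2 hi, mul_zero]
      have : (inner ℝ (b i) x : ℝ) = (inner ℝ (b i) (x - (inner ℝ d x : ℝ) • d) : ℝ) := by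
        rw [inner_sub_right, horth, sub_zero]
      rw [this]
      have habs : |(inner ℝ (b i) (x - (inner ℝ d x : ℝ) • d) : ℝ)| ≤ t := by
        calc |(inner ℝ (b i) (x - (inner ℝ d x : ℝ) • d) : ℝ)|
            ≤ ‖b i‖ * ‖x - (inner ℝ d x : ℝ) • d‖ := abs_real_inner_le_norm _ _
          _ = ‖x - (inner ℝ d x : ℝ) • d‖ := by rw [b.orthonormal.1 i, one_mul]
          _ ≤ t := hx2
      exact abs_le.1 habs
  calc volume {x : E3 | |(inner ℝ d x : ℝ)| ≤ 1 ∧ ‖x - (inner ℝ d x : ℝ) • d‖ ≤ t}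
      ≤ volume (b.repr ⁻¹' ((MeasurableEquiv.toLp 2 (Fin 3 → ℝ)).symm ⁻¹' B)) :=
        measure_mono hsub
    _ = volume ((MeasurableEquiv.toLp 2 (Fin 3 → ℝ)).symm ⁻¹' B) :=
        b.measurePreserving_repr.measure_preimage
          (hBm.preimage (MeasurableEquiv.toLp 2 (Fin 3 → ℝ)).symm.measurable).nullMeasurableSet
    _ = volume B :=
        (EuclideanSpace.volume_preserving_symm_measurableEquiv_toLp (Fin 3)).measure_preimage
          hBm.nullMeasurableSet
    _ = ENNReal.ofReal (8 * t ^ 2) := by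
        rw [hB, volume_pi_pi]
        have h0 : (if (0 : Fin 3) = 0 then (1:ℝ) else t) = 1 := by norm_num
        have h1 : (if (1 : Fin 3) = 0 then (1:ℝ) else t) = t := by norm_num [Fin.ext_iff]
        have h2 : (if (2 : Fin 3) = 0 then (1:ℝ) else t) = t := by norm_num [Fin.ext_iff]
        simp only [Real.volume_Icc, Fin.prod_univ_three, h0, h1, h2, eq_self_iff_true, if_true]
        rw [← ENNReal.ofReal_mul (by norm_num : (0:ℝ) ≤ 1 - -1),
          ← ENNReal.ofReal_mul (by nlinarith : (0:ℝ) ≤ (1 - -1) * (t - -t))]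
        congr 1
        ring

/-- Spherical cap bound: the uniform measure of a cap of angular radius `t` is `≲ t²`. -/
lemma cap_le (d : E3) (hd : ‖d‖ = 1) (t : ℝ) :
    uniformS2 {u : S2 | angle d (u : E3) ≤ t} ≤ spK * ENNReal.ofReal (t ^ 2) := by
  rcases lt_or_ge t 0 with ht | ht
  · have hempty : {u : S2 | angle d (u : E3) ≤ t} = ∅ := by
      ext u
      simp only [Set.mem_setOf_eq, Set.mem_empty_iff_false, iff_false, not_le]
      exact lt_of_lt_of_le ht (angle_nonneg _ _)
    simp [hempty]
  · have hs : MeasurableSet {u : S2 | angle d (u : E3) ≤ t} :=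
      measurableSet_le (measurable_angle2 measurable_const
        continuous_subtype_val.measurable) measurable_const
    have hsub : Ioo (0:ℝ) 1 • ((↑) '' {u : S2 | angle d (u : E3) ≤ t})
        ⊆ {x : E3 | |(inner ℝ d x : ℝ)| ≤ 1 ∧ ‖x - (inner ℝ d x : ℝ) • d‖ ≤ t} := by
      intro x hx
      obtain ⟨r, hr, y, hy, rfl⟩ := Set.mem_smul.1 hx
      obtain ⟨u, hu, rfl⟩ := hy
      obtain ⟨hr0, hr1⟩ := hr
      have hnu : ‖(u : E3)‖ = 1 := by
        simpa using mem_sphere_zero_iff_norm.1 u.2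
      have hnx : ‖r • (u : E3)‖ = r := by
        rw [norm_smul, hnu, mul_one, Real.norm_eq_abs, abs_of_pos hr0]
      have hangle : angle d (r • (u : E3)) = angle d (u : E3) :=
        angle_smul_right_of_pos d _ hr0
      set θ := angle d (r • (u : E3)) with hθ
      have hθt : θ ≤ t := by rw [hangle]; exact hu
      have hθ0 : 0 ≤ θ := angle_nonneg _ _
      have hθpi : θ ≤ π := angle_le_pi _ _
      have hc : (inner ℝ d (r • (u : E3)) : ℝ) = Real.cos θ * r := by
        have := cos_angle_mul_norm_mul_norm d (r • (u : E3))
        rw [hd, hnx, one_mul] at this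
        exact this.symm
      constructor
      · calc |(inner ℝ d (r • (u : E3)) : ℝ)| ≤ ‖d‖ * ‖r • (u : E3)‖ :=
            abs_real_inner_le_norm _ _
          _ = r := by rw [hd, hnx, one_mul]
          _ ≤ 1 := hr1.le
      · rw [Set.mem_setOf_eq] at *
        rw [hc]
        have hns : ‖r • (u : E3) - (Real.cos θ * r) • d‖ ^ 2
            = ‖r • (u : E3)‖ ^ 2 - 2 * (inner ℝ (r • (u : E3)) ((Real.cos θ * r) • d) : ℝ)
              + ‖(Real.cos θ * r) • d‖ ^ 2 := norm_sub_sq_real _ _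
        have h1 : (inner ℝ (r • (u : E3)) ((Real.cos θ * r) • d) : ℝ)
            = (Real.cos θ * r) * (Real.cos θ * r) := by
          rw [real_inner_smul_right, real_inner_comm, hc]
        have h2 : ‖(Real.cos θ * r) • d‖ ^ 2 = (Real.cos θ * r) ^ 2 := by
          rw [norm_smul, hd, mul_one, Real.norm_eq_abs, sq_abs]
        have hsin0 : 0 ≤ Real.sin θ := Real.sin_nonneg_of_nonneg_of_le_pi hθ0 hθpi
        have hsint : Real.sin θ ≤ t := le_trans (Real.sin_le hθ0) hθt
        have hpyth := Real.sin_sq_add_cos_sq θ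
        have hr2 : r ^ 2 ≤ 1 := by nlinarith
        have h5 : r ^ 2 * Real.sin θ ^ 2 ≤ t ^ 2 := by
          nlinarith [sq_nonneg (Real.sin θ), mul_le_mul hsint hsint hsin0 ht]
        have hsq2 : ‖r • (u : E3) - (Real.cos θ * r) • d‖ ^ 2 ≤ t ^ 2 := by
          rw [hns, h1, h2, hnx]
          nlinarith [sq_nonneg r]
        nlinarith [norm_nonneg (r • (u : E3) - (Real.cos θ * r) • d)]
    have step : (volume : Measure E3).toSphere {u : S2 | angle d (u : E3) ≤ t}
        ≤ 24 * ENNReal.ofReal (t ^ 2) := by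
      rw [Measure.toSphere_apply' _ hs]
      calc (Module.finrank ℝ E3 : ℝ≥0∞)
            * volume (Ioo (0:ℝ) 1 • (Subtype.val '' {u : S2 | angle d (u : E3) ≤ t}))
          ≤ (Module.finrank ℝ E3 : ℝ≥0∞) * ENNReal.ofReal (8 * t ^ 2) := by
            gcongr
            exact le_trans (measure_mono hsub) (volT_le d hd t ht)
        _ = 24 * ENNReal.ofReal (t ^ 2) := by
            rw [finrank_euclideanSpace_fin]
            rw [show ((3:ℕ) : ℝ≥0∞) = ENNReal.ofReal 3 by simp,
              show (24 : ℝ≥0∞) = ENNReal.ofReal 24 by simp,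
              ← ENNReal.ofReal_mul (by norm_num), ← ENNReal.ofReal_mul (by norm_num)]
            congr 1
            ring
    rw [uniformS2, Measure.smul_apply, smul_eq_mul, spK, mul_assoc]
    exact mul_le_mul_right step _

/-- The tail integral constant. -/
def C2 : ℝ≥0∞ := ∫⁻ h in Ioi (1:ℝ), ENNReal.ofReal (4 / h ^ 2)

lemma C2_lt_top : C2 < ⊤ := by
  have hint : IntegrableOn (fun h : ℝ => 4 * h ^ (-2:ℝ)) (Ioi 1) :=
    (integrableOn_Ioi_rpow_of_lt (by norm_num) one_pos).const_mul 4
  have heq : C2 = ∫⁻ h in Ioi (1:ℝ), ENNReal.ofReal (4 * h ^ (-2:ℝ)) := by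
    rw [C2]
    refine setLIntegral_congr_fun measurableSet_Ioi (fun h hh => ?_)
    have h0 : (0:ℝ) < h := lt_trans one_pos hh
    congr 1
    rw [Real.rpow_neg h0.le, show ((2:ℝ)) = ((2:ℕ):ℝ) by norm_num, Real.rpow_natCast]
    field_simp
  rw [heq]
  exact hint.setLIntegral_lt_top

/-- Key estimate: the `h`-integral of the cap measure is uniformly bounded. -/
lemma key_integral (d : E3) (hd : ‖d‖ = 1) :
    ∫⁻ h in Ioi (0:ℝ), uniformS2 {v : S2 | angle d (v : E3) ≤ 2 / h}
      ≤ 1 + spK * C2 := by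
  have hsplit : Ioi (0:ℝ) = Ioc 0 1 ∪ Ioi 1 := (Set.Ioc_union_Ioi_eq_Ioi zero_le_one).symm
  rw [hsplit,
    lintegral_union measurableSet_Ioi (Set.Ioc_disjoint_Ioi le_rfl)]
  gcongr
  · calc ∫⁻ h in Ioc (0:ℝ) 1, uniformS2 {v : S2 | angle d (v : E3) ≤ 2 / h}
        ≤ ∫⁻ _ in Ioc (0:ℝ) 1, 1 := lintegral_mono fun h => prob_le_one
      _ = 1 := by simp [Real.volume_Ioc]
  · calc ∫⁻ h in Ioi (1:ℝ), uniformS2 {v : S2 | angle d (v : E3) ≤ 2 / h}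
        ≤ ∫⁻ h in Ioi (1:ℝ), spK * ENNReal.ofReal (4 / h ^ 2) := by
          refine lintegral_mono fun h => ?_
          have := cap_le d hd (2 / h)
          have hrw : (2 / h) ^ 2 = 4 / h ^ 2 := by rw [div_pow]; norm_num
          rwa [hrw] at this
      _ = spK * C2 := by
          rw [C2, lintegral_const_mul]
          exact ENNReal.measurable_ofReal.comp
            (measurable_const.div (measurable_id.pow_const 2))

theorem stmt_2 (e : S2) :
    lamD {p : S2 × ℝ × S2 | angle (-(e : E3)) (p.1 : E3) ≤ 2 / p.2.1} < ⊤ ∧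
    lamD {p : S2 × ℝ × S2 | angle (-(p.1 : E3)) (p.2.2 : E3) ≤ 2 / p.2.1} < ⊤ := by
  have hbound : (1 : ℝ≥0∞) + spK * C2 < ⊤ := by
    refine ENNReal.add_lt_top.2 ⟨ENNReal.one_lt_top, ENNReal.mul_lt_top ?_ C2_lt_top⟩
    exact lt_top_iff_ne_top.2 spK_ne_top
  have hnorm_e : ‖(-(e : E3))‖ = 1 := by
    rw [norm_neg]; simpa using mem_sphere_zero_iff_norm.1 e.2
  constructor
  · -- first set
    set d := -(e : E3) with hddef
    have hA : MeasurableSet {p : S2 × ℝ × S2 | angle d (p.1 : E3) ≤ 2 / p.2.1} := by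
      refine measurableSet_le (measurable_angle2 measurable_const
        (continuous_subtype_val.measurable.comp measurable_fst)) ?_
      exact measurable_const.div (measurable_fst.comp measurable_snd)
    rw [lamD, Measure.prod_apply_symm hA]
    have hS : MeasurableSet {z : ℝ × S2 | angle d (z.2 : E3) ≤ 2 / z.1} :=
      measurableSet_le (measurable_angle2 measurable_const
        (continuous_subtype_val.measurable.comp measurable_snd))
        (measurable_const.div measurable_fst)
    set f : ℝ → ℝ≥0∞ := fun h => uniformS2 {v : S2 | angle d (v : E3) ≤ 2 / h} with hfdef
    have hf : Measurable f :=
      measurable_measure_prodMk_left (ν := uniformS2) hS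
    have hkey : ∫⁻ q, f q.1
        ∂((volume.restrict (Set.Ioi (0:ℝ))).prod uniformS2) ≤ 1 + spK * C2 := by
      have hmap : ∫⁻ q, f q.1 ∂((volume.restrict (Set.Ioi (0:ℝ))).prod uniformS2)
          = ∫⁻ h, f h ∂(volume.restrict (Set.Ioi (0:ℝ))) := by
        rw [← lintegral_map hf measurable_fst, Measure.map_fst_prod, measure_univ, one_smul]
      rw [hmap]
      exact key_integral d hnorm_e
    calc ∫⁻ q, uniformS2 ((fun u => (u, q)) ⁻¹'
          {p : S2 × ℝ × S2 | angle d (p.1 : E3) ≤ 2 / p.2.1})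
          ∂((volume.restrict (Set.Ioi (0:ℝ))).prod uniformS2)
        = ∫⁻ q, f q.1 ∂((volume.restrict (Set.Ioi (0:ℝ))).prod uniformS2) := rfl
      _ ≤ 1 + spK * C2 := hkey
      _ < ⊤ := hbound
  · -- second set
    have hB : MeasurableSet {p : S2 × ℝ × S2 | angle (-(p.1 : E3)) (p.2.2 : E3) ≤ 2 / p.2.1} := by
      refine measurableSet_le (measurable_angle2 ?_ ?_) ?_
      · exact (continuous_subtype_val.comp continuous_fst).neg.measurable
      · exact continuous_subtype_val.measurable.comp (measurable_snd.comp measurable_snd)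
      · exact measurable_const.div (measurable_fst.comp measurable_snd)
    rw [lamD, Measure.prod_apply hB]
    have hslice : ∀ u : S2,
        ((volume.restrict (Set.Ioi (0:ℝ))).prod uniformS2)
          (Prod.mk u ⁻¹' {p : S2 × ℝ × S2 | angle (-(p.1 : E3)) (p.2.2 : E3) ≤ 2 / p.2.1})
          ≤ 1 + spK * C2 := by
      intro u
      have hSu : MeasurableSet {q : ℝ × S2 | angle (-(u : E3)) (q.2 : E3) ≤ 2 / q.1} :=
        measurableSet_le (measurable_angle2 measurable_const
          (continuous_subtype_val.measurable.comp measurable_snd))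
          (measurable_const.div measurable_fst)
      have hpre : Prod.mk u ⁻¹' {p : S2 × ℝ × S2 | angle (-(p.1 : E3)) (p.2.2 : E3) ≤ 2 / p.2.1}
          = {q : ℝ × S2 | angle (-(u : E3)) (q.2 : E3) ≤ 2 / q.1} := rfl
      rw [hpre, Measure.prod_apply hSu]
      have hnu : ‖(-(u : E3))‖ = 1 := by
        rw [norm_neg]; simpa using mem_sphere_zero_iff_norm.1 u.2
      have := key_integral (-(u : E3)) hnu
      calc ∫⁻ h, uniformS2 (Prod.mk h ⁻¹'
            {q : ℝ × S2 | angle (-(u : E3)) (q.2 : E3) ≤ 2 / q.1})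
            ∂(volume.restrict (Set.Ioi (0:ℝ)))
          = ∫⁻ h in Ioi (0:ℝ), uniformS2 {v : S2 | angle (-(u : E3)) (v : E3) ≤ 2 / h} := rfl
        _ ≤ 1 + spK * C2 := this
    calc ∫⁻ u, ((volume.restrict (Set.Ioi (0:ℝ))).prod uniformS2)
          (Prod.mk u ⁻¹' {p : S2 × ℝ × S2 | angle (-(p.1 : E3)) (p.2.2 : E3) ≤ 2 / p.2.1})
          ∂uniformS2
        ≤ ∫⁻ _, (1 + spK * C2) ∂uniformS2 := lintegral_mono hslice
      _ = 1 + spK * C2 := by simp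
      _ < ⊤ := hbound

end
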